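/- arXiv:2007.14961 — 3 statements merged into one kernel-verified Lean document; each statement's English description precedes it below -/
import Mathlib

section
/- If (w1, ..., wI) ~ logisticMCAR(m̃, ρ, Σ; G), then for each i and all l, k ∈ {1,...,H}: E[log(w_{il}/w_{ik}) | w_{-i}] = (ρ|U_i| + 1 − ρ)^{-1} · log( (m_{il}/m_{ik})^{1−ρ} · Π_{j∈U_i} (w_{jl}/w_{jk})^ρ ), where U_i = {j : g_{ij} > 0}, |U_i| = Σ_j g_{ij}, and m_i = alr^{-1}(m̃_i). -/
open scoped BigOperators
open Finset

def Spos (H : ℕ) : Set (Fin (H + 1) → ℝ) :=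
  {w | (∀ h, 0 < w h) ∧ ∑ h, w h = 1}

/-- Extended additive log-ratio: `log (w_l / w_H)` for every index `l` (it is `0`
at `l = H`). -/
noncomputable def alrE {H : ℕ} (w : Fin (H + 1) → ℝ) (l : Fin (H + 1)) : ℝ :=
  Real.log (w l / w (Fin.last H))

lemma alrE_sub {H : ℕ} (v : Fin (H + 1) → ℝ) (hv : ∀ h, 0 < v h) (l k : Fin (H + 1)) :
    alrE v l - alrE v k = Real.log (v l / v k) := by
  unfold alrE
  rw [← Real.log_div (ne_of_gt (div_pos (hv l) (hv (Fin.last H)))) (ne_of_gt (div_pos (hv k) (hv (Fin.last H))))]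
  congr 1
  have h1 := (hv (Fin.last H)).ne'
  have h2 := (hv k).ne'
  field_simp

/-- Proposition 1 (conditional means of the logisticMCAR).  Under the MCAR model,
`E[alr(w_i) | w_{-i}]` is the vector
`(ρ ∑_j g_{ij} alr(w_j) + (1-ρ) alr(m_i)) / (ρ ∑_j g_{ij} + 1 - ρ)`; by linearity,
`E[log(w_{il}/w_{ik}) | w_{-i}]` is the difference of the `l`-th and `k`-th
(extended) coordinates of this vector, and it equals
`(ρ|U_i| + 1 - ρ)⁻¹ log( (m_{il}/m_{ik})^{1-ρ} ∏_{j∈U_i} (w_{jl}/w_{jk})^ρ )`. -/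
theorem logisticMCAR_conditional_mean
    (H I : ℕ) (g : Fin I → Fin I → ℝ)
    (hg01 : ∀ i j, g i j = 0 ∨ g i j = 1)
    (hgsymm : ∀ i j, g i j = g j i) (hgdiag : ∀ i, g i i = 0)
    (ρ : ℝ) (hρ : ρ ∈ Set.Ioo (0 : ℝ) 1)
    (w : Fin I → Fin (H + 1) → ℝ) (hw : ∀ j, w j ∈ Spos H)
    (m : Fin I → Fin (H + 1) → ℝ) (hm : ∀ i, m i ∈ Spos H)
    (i : Fin I) (l k : Fin (H + 1)) :
    -- conditional expectation of log(w_{il}/w_{ik}) given w_{-i}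
    (ρ * ∑ j, g i j * alrE (w j) l + (1 - ρ) * alrE (m i) l) /
        (ρ * ∑ j, g i j + 1 - ρ) -
      (ρ * ∑ j, g i j * alrE (w j) k + (1 - ρ) * alrE (m i) k) /
        (ρ * ∑ j, g i j + 1 - ρ) =
    (ρ * ∑ j, g i j + 1 - ρ)⁻¹ *
      Real.log ((m i l / m i k) ^ (1 - ρ) *
        ∏ j ∈ univ.filter (fun j => 0 < g i j), (w j l / w j k) ^ ρ) := by
  have hwpos : ∀ j h, 0 < w j h := fun j => (hw j).1
  have hmpos : ∀ h, 0 < m i h := (hm i).1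
  rw [div_sub_div_same, div_eq_inv_mul]
  congr 1
  have hlogprod :
      Real.log (∏ j ∈ univ.filter (fun j => 0 < g i j), (w j l / w j k) ^ ρ) =
        ∑ j ∈ univ.filter (fun j => 0 < g i j), ρ * Real.log (w j l / w j k) := by
    rw [Real.log_prod]
    · exact Finset.sum_congr rfl fun j _ => Real.log_rpow (div_pos (hwpos j l) (hwpos j k)) ρ
    · intro j _
      exact ne_of_gt (Real.rpow_pos_of_pos (div_pos (hwpos j l) (hwpos j k)) ρ)
  have hprodpos : 0 < ∏ j ∈ univ.filter (fun j => 0 < g i j), (w j l / w j k) ^ ρ := by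
    exact Finset.prod_pos fun j _ => Real.rpow_pos_of_pos (div_pos (hwpos j l) (hwpos j k)) ρ
  rw [Real.log_mul (ne_of_gt (Real.rpow_pos_of_pos (div_pos (hmpos l) (hmpos k)) _)) (ne_of_gt hprodpos),
    Real.log_rpow (div_pos (hmpos l) (hmpos k)), hlogprod]
  have hsum : ∑ j ∈ univ.filter (fun j => 0 < g i j), ρ * Real.log (w j l / w j k) =
      ∑ j, g i j * (ρ * Real.log (w j l / w j k)) := by
    rw [Finset.sum_filter]
    refine Finset.sum_congr rfl fun j _ => ?_
    rcases hg01 i j with h | h <;> simp [h]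
  rw [hsum]
  have hterm : ∀ j, g i j * (ρ * Real.log (w j l / w j k)) =
      ρ * (g i j * alrE (w j) l) - ρ * (g i j * alrE (w j) k) := by
    intro j
    rw [← alrE_sub (w j) (hwpos j)]
    ring
  rw [Finset.sum_congr rfl fun j _ => hterm j, Finset.sum_sub_distrib,
    ← Finset.mul_sum, ← Finset.mul_sum, ← alrE_sub (m i) hmpos]
  ring
end

section
/- If (w1, ..., wI) ~ logisticMCAR(m̃, ρ, Σ; G) with m̃ = 0, then Cov(log(w_{il}/w_{im}), log(w_{jl}/w_{jm})) = A_{ij}(Σ_{ll} − 2Σ_{lm} + Σ_{mm}) for l, m ∈ {1,...,H−1}, and Cov(log(w_{il}/w_{iH}), log(w_{jl}/w_{jH})) = A_{ij} Σ_{ll}, where A = (F − ρG)^{-1}. -/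
open scoped BigOperators
open MeasureTheory

noncomputable def alr {H : ℕ} (w : Fin (H + 1) → ℝ) : Fin H → ℝ :=
  fun j => Real.log (w j.castSucc / w (Fin.last H))


section LMCARAux
open Real Filter ProbabilityTheory Matrix
open scoped NNReal ENNReal

namespace LMCAR

lemma rpow_two_eq_sq (x : ℝ) : x ^ (2:ℝ) = x ^ 2 := by
  rcases lt_trichotomy x 0 with hx | hx | hx
  · rw [Real.rpow_def_of_neg hx, Real.cos_two_pi, mul_one, ← Real.log_abs, mul_comm,
      show (2:ℝ) * Real.log |x| = ((2:ℕ):ℝ) * Real.log |x| by norm_num,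
      Real.exp_nat_mul, Real.exp_log (abs_pos.mpr hx.ne), sq_abs]
  · simp [hx]
  · rw [← Real.rpow_natCast x 2]; norm_num

lemma sq_exp_integrable {b : ℝ} (hb : 0 < b) :
    Integrable (fun x : ℝ => x ^ 2 * Real.exp (-b * x ^ 2)) := by
  have h := integrable_rpow_mul_exp_neg_mul_sq hb (s := 2) (by norm_num)
  convert h using 2 with x
  rw [rpow_two_eq_sq]

lemma sq_exp_integral {b : ℝ} (hb : 0 < b) :
    ∫ x : ℝ, x ^ 2 * Real.exp (-b * x ^ 2) = Real.sqrt (π / b) / (2 * b) := by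
  set f : ℝ → ℝ := fun x => x * Real.exp (-b * x ^ 2) with hf
  have hderiv : ∀ x, HasDerivAt f (Real.exp (-b * x ^ 2) - 2 * b * (x ^ 2 * Real.exp (-b * x ^ 2))) x := by
    intro x
    have h1 : HasDerivAt (fun x : ℝ => -b * x ^ 2) (-b * (2 * x)) x := by
      simpa using ((hasDerivAt_pow 2 x).const_mul (-b))
    have h3 := ((hasDerivAt_id x).mul h1.exp)
    refine HasDerivAt.congr_deriv h3 ?_
    simp only [id_eq]; ring
  have hint : Integrable (fun x : ℝ => Real.exp (-b * x ^ 2) - 2 * b * (x ^ 2 * Real.exp (-b * x ^ 2))) :=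
    (integrable_exp_neg_mul_sq hb).sub ((sq_exp_integrable hb).const_mul _)
  have htop : Tendsto f atTop (nhds 0) := by
    have ho : f =o[atTop] fun x => Real.exp (-(1/2) * x) := by
      have := rpow_mul_exp_neg_mul_sq_isLittleO_exp_neg hb 1
      refine this.congr' ?_ (by rfl)
      filter_upwards [eventually_ge_atTop (0:ℝ)] with x hx
      rw [Real.rpow_one]
    refine ho.trans_tendsto ?_
    exact Real.tendsto_exp_atBot.comp (by
      apply Tendsto.const_mul_atTop_of_neg (by norm_num) tendsto_id |>.mono_right le_rfl)
  have hbot : Tendsto f atBot (nhds 0) := by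
    have h2 := (htop.comp tendsto_neg_atBot_atTop).neg
    rw [neg_zero] at h2
    refine h2.congr fun x => ?_
    simp only [hf, Function.comp_apply, neg_mul, neg_neg, neg_sq]
  have key := integral_of_hasDerivAt_of_tendsto hderiv hint hbot htop
  rw [integral_sub (integrable_exp_neg_mul_sq hb) ((sq_exp_integrable hb).const_mul _),
    integral_gaussian, integral_const_mul] at key
  have h2b : (2*b) ≠ 0 := by positivity
  field_simp at key ⊢
  linarith [key]

open ProbabilityTheory
open scoped NNReal ENNReal

lemma gaussianReal_eq_wd (v : ℝ≥0) (hv : v ≠ 0) :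
    gaussianReal 0 v = volume.withDensity
      (fun x => ((Real.toNNReal (gaussianPDFReal 0 v x) : ℝ≥0∞))) := by
  rw [gaussianReal_of_var_ne_zero 0 hv]
  rfl

lemma pdf_meas (v : ℝ≥0) : Measurable (fun x => Real.toNNReal (gaussianPDFReal 0 v x)) :=
  (measurable_gaussianPDFReal 0 v).real_toNNReal

lemma integral_gaussian_pdf (v : ℝ≥0) (hv : v ≠ 0) (g : ℝ → ℝ) :
    ∫ x, g x ∂(gaussianReal 0 v) = ∫ x, gaussianPDFReal 0 v x * g x := by
  rw [gaussianReal_eq_wd v hv, integral_withDensity_eq_integral_smul (pdf_meas v)]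
  congr 1 with x
  rw [NNReal.smul_def, Real.coe_toNNReal _ (gaussianPDFReal_nonneg 0 v x), smul_eq_mul]

lemma integral_odd_pdf (v : ℝ≥0) : ∫ x, gaussianPDFReal 0 v x * x = 0 := by
  have hmap : Measure.map (⇑(Homeomorph.neg ℝ).toMeasurableEquiv) (volume : Measure ℝ) = volume := by
    exact Measure.map_neg_eq_self _
  have h := integral_map_equiv (μ := (volume : Measure ℝ)) (Homeomorph.neg ℝ).toMeasurableEquiv
    (fun x => gaussianPDFReal 0 v x * x)
  rw [hmap] at h
  simp only [show ⇑(Homeomorph.neg ℝ).toMeasurableEquiv = fun x : ℝ => -x from rfl] at h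
  have h2 : ∀ x : ℝ, gaussianPDFReal 0 v (-x) = gaussianPDFReal 0 v x := by
    intro x; simp only [gaussianPDFReal]; ring_nf
  simp only [h2, mul_neg] at h
  rw [integral_neg] at h
  linarith

lemma gauss_mean (v : ℝ≥0) : ∫ x, x ∂(gaussianReal 0 v) = 0 := by
  by_cases hv : v = 0
  · simp [hv]
  · rw [integral_gaussian_pdf v hv]; exact integral_odd_pdf v

lemma pdf_eq (v : ℝ≥0) (hv : v ≠ 0) (x : ℝ) :
    gaussianPDFReal 0 v x = (Real.sqrt (2 * Real.pi * v))⁻¹ *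
      Real.exp (-(2 * (v:ℝ))⁻¹ * x ^ 2) := by
  have hv' : (0:ℝ) < v := lt_of_le_of_ne v.2 (by exact_mod_cast (Ne.symm hv))
  rw [gaussianPDFReal]
  congr 1
  rw [sub_zero]
  rw [neg_div]
  congr 1
  field_simp

lemma gauss_sq (v : ℝ≥0) : ∫ x, x ^ 2 ∂(gaussianReal 0 v) = v := by
  by_cases hv : v = 0
  · simp [hv]
  · have hv' : (0:ℝ) < v := lt_of_le_of_ne v.2 (by exact_mod_cast (Ne.symm hv))
    rw [integral_gaussian_pdf v hv]
    have hb : (0:ℝ) < (2 * (v:ℝ))⁻¹ := by positivity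
    calc ∫ x, gaussianPDFReal 0 v x * x ^ 2
        = (Real.sqrt (2 * Real.pi * v))⁻¹ * ∫ x, x ^ 2 * Real.exp (-(2 * (v:ℝ))⁻¹ * x ^ 2) := by
          rw [← integral_const_mul]
          congr 1 with x
          rw [pdf_eq v hv]; ring
      _ = v := by
          rw [sq_exp_integral hb]
          have h1 : Real.pi / ((2 * (v:ℝ))⁻¹) = 2 * Real.pi * v := by field_simp
          rw [h1]
          have h2 : Real.sqrt (2 * Real.pi * v) ≠ 0 := by
            have : (0:ℝ) < 2 * Real.pi * v := by positivity
            positivity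
          field_simp

lemma gauss_memLp (v : ℝ≥0) : MemLp id 2 (gaussianReal 0 v) := by
  refine (memLp_two_iff_integrable_sq aestronglyMeasurable_id).mpr ?_
  by_cases hv : v = 0
  · simp only [hv, gaussianReal_zero_var]
    exact (integrable_const ((0:ℝ)^2)).congr (MeasureTheory.ae_eq_dirac (fun x : ℝ => x ^ 2)).symm
  · rw [gaussianReal_eq_wd v hv, integrable_withDensity_iff_integrable_smul (pdf_meas v)]
    have hv' : (0:ℝ) < v := lt_of_le_of_ne v.2 (by exact_mod_cast (Ne.symm hv))
    have hb : (0:ℝ) < (2 * (v:ℝ))⁻¹ := by positivity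
    refine ((sq_exp_integrable hb).const_mul ((Real.sqrt (2 * Real.pi * v))⁻¹)).congr ?_
    filter_upwards with x
    rw [NNReal.smul_def, Real.coe_toNNReal _ (gaussianPDFReal_nonneg 0 v x), smul_eq_mul,
      pdf_eq v hv]
    show (Real.sqrt (2 * Real.pi * v))⁻¹ * (x ^ 2 * Real.exp (-(2 * (v:ℝ))⁻¹ * x ^ 2))
      = (Real.sqrt (2 * Real.pi * v))⁻¹ * Real.exp (-(2 * (v:ℝ))⁻¹ * x ^ 2) * (id x) ^ 2
    simp only [id]
    ring

variable {Ω : Type*} [MeasureSpace Ω] (P : Measure Ω) [IsProbabilityMeasure P]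

lemma map_mean {X : Ω → ℝ} (hX : Measurable X) {v : ℝ≥0}
    (h : Measure.map X P = gaussianReal 0 v) : ∫ ω, X ω ∂P = 0 := by
  have := integral_map (f := fun x : ℝ => x) hX.aemeasurable
    (by rw [h]; exact aestronglyMeasurable_id)
  rw [h, gauss_mean] at this
  exact this.symm

lemma map_sq {X : Ω → ℝ} (hX : Measurable X) {v : ℝ≥0}
    (h : Measure.map X P = gaussianReal 0 v) : ∫ ω, X ω ^ 2 ∂P = v := by
  have := integral_map (f := fun x : ℝ => x ^ 2) hX.aemeasurable
    (by rw [h]; exact (measurable_id.pow_const 2).aestronglyMeasurable)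
  rw [h, gauss_sq] at this
  exact this.symm

lemma map_memLp {X : Ω → ℝ} (hX : Measurable X) {v : ℝ≥0}
    (h : Measure.map X P = gaussianReal 0 v) : MemLp X 2 P := by
  have h2 : MemLp id 2 (Measure.map X P) := h ▸ gauss_memLp v
  exact (memLp_map_measure_iff aestronglyMeasurable_id hX.aemeasurable).mp h2

end LMCAR

namespace LMCAR
section MatrixPart
variable {I : ℕ}

lemma Mpos (G : Matrix (Fin I) (Fin I) ℝ)
    (hG01 : ∀ i j, G i j = 0 ∨ G i j = 1)
    (hGsymm : G.IsSymm) (ρ : ℝ) (hρ : ρ ∈ Set.Ioo (0 : ℝ) 1) :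
    (Matrix.diagonal (fun i => ρ * ∑ j, G i j + 1 - ρ) - ρ • G).PosDef := by
  set d : Fin I → ℝ := fun i => ρ * ∑ j, G i j + 1 - ρ with hd
  have hGnn : ∀ i j, 0 ≤ G i j := by
    intro i j; rcases hG01 i j with h | h <;> rw [h] <;> norm_num
  refine Matrix.posDef_iff_dotProduct_mulVec.mpr ⟨?_, ?_⟩
  · refine Matrix.IsHermitian.sub ?_ ?_
    · exact Matrix.isHermitian_diagonal_of_self_adjoint _ (funext fun i => star_trivial _)
    · show (ρ • G)ᴴ = ρ • G
      ext i j
      simp [Matrix.conjTranspose_apply, hGsymm.apply i j]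
  · intro x hx
    have key : (star x) ⬝ᵥ ((Matrix.diagonal d - ρ • G) *ᵥ x) =
        (1 - ρ) * ∑ i, x i ^ 2 + ρ / 2 * ∑ i, ∑ j, G i j * (x i - x j) ^ 2 := by
      have swap : ∑ i, ∑ j, G i j * x j ^ 2 = ∑ i, ∑ j, G i j * x i ^ 2 := by
        rw [Finset.sum_comm]
        refine Finset.sum_congr rfl fun i _ => Finset.sum_congr rfl fun j _ => ?_
        rw [hGsymm.apply]
      have expand : ∀ i j, G i j * (x i - x j) ^ 2
          = G i j * x i ^ 2 + G i j * x j ^ 2 - 2 * (G i j * (x i * x j)) := by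
        intro i j; ring
      simp only [star_trivial, Matrix.sub_mulVec, Matrix.smul_mulVec,
        dotProduct_sub, dotProduct_smul, smul_eq_mul]
      have h1 : x ⬝ᵥ (Matrix.diagonal d *ᵥ x) = ρ * ∑ i, ∑ j, G i j * x i ^ 2
          + (1 - ρ) * ∑ i, x i ^ 2 := by
        simp only [dotProduct, Matrix.mulVec_diagonal]
        rw [Finset.mul_sum, Finset.mul_sum, ← Finset.sum_add_distrib]
        refine Finset.sum_congr rfl fun i _ => ?_
        rw [← Finset.sum_mul]
        simp only [hd]
        ring
      have h2 : x ⬝ᵥ (G *ᵥ x) = ∑ i, ∑ j, G i j * (x i * x j) := by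
        simp only [dotProduct, Matrix.mulVec, dotProduct]
        refine Finset.sum_congr rfl fun i _ => ?_
        rw [Finset.mul_sum]
        exact Finset.sum_congr rfl fun j _ => by ring
      rw [h1, h2]
      simp only [expand]
      rw [Finset.sum_congr rfl (fun i (_ : i ∈ Finset.univ) =>
        (Finset.sum_sub_distrib (s := Finset.univ)
          (f := fun j => G i j * x i ^ 2 + G i j * x j ^ 2)
          (g := fun j => 2 * (G i j * (x i * x j))))),
        Finset.sum_sub_distrib]
      rw [Finset.sum_congr rfl (fun i (_ : i ∈ Finset.univ) =>
        (Finset.sum_add_distrib (s := Finset.univ)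
          (f := fun j => G i j * x i ^ 2) (g := fun j => G i j * x j ^ 2))),
        Finset.sum_add_distrib, swap]
      simp only [← Finset.mul_sum]
      ring
    rw [key]
    have hpos : 0 < ∑ i, x i ^ 2 := by
      have hne : ∃ i, x i ≠ 0 := by
        by_contra h
        push_neg at h
        exact hx (funext h)
      obtain ⟨i, hi⟩ := hne
      refine Finset.sum_pos' (fun j _ => sq_nonneg _) ⟨i, Finset.mem_univ i, by positivity⟩
    have hnn : 0 ≤ ∑ i, ∑ j, G i j * (x i - x j) ^ 2 :=
      Finset.sum_nonneg fun i _ => Finset.sum_nonneg fun j _ =>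
        mul_nonneg (hGnn i j) (sq_nonneg _)
    have h1 : 0 < (1 - ρ) * ∑ i, x i ^ 2 := by
      have := hρ.2; nlinarith
    have h2 : 0 ≤ ρ / 2 * ∑ i, ∑ j, G i j * (x i - x j) ^ 2 := by
      have := hρ.1; positivity
    linarith

end MatrixPart

lemma quad_nonneg {I H : ℕ} {A : Matrix (Fin I) (Fin I) ℝ} {S : Matrix (Fin H) (Fin H) ℝ}
    (hA : A.PosSemidef) (hS : S.PosSemidef) (u : Fin I → Fin H → ℝ) :
    0 ≤ ∑ i, ∑ j, ∑ r, ∑ s, u i r * (A i j * S r s) * u j s := by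
  open scoped MatrixOrder in obtain ⟨B, hB⟩ := CStarAlgebra.nonneg_iff_eq_star_mul_self.mp hA.nonneg
  open scoped MatrixOrder in obtain ⟨C, hC⟩ := CStarAlgebra.nonneg_iff_eq_star_mul_self.mp hS.nonneg
  have hAij : ∀ i j, A i j = ∑ k, B k i * B k j := by
    intro i j; rw [hB]; simp [Matrix.mul_apply, Matrix.conjTranspose_apply]
  have hSrs : ∀ r s, S r s = ∑ t, C t r * C t s := by
    intro r s; rw [hC]; simp [Matrix.mul_apply, Matrix.conjTranspose_apply]
  set F : (Fin I × Fin H) → (Fin I × Fin H) → ℝ :=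
    fun z p => B z.1 p.1 * C z.2 p.2 * u p.1 p.2 with hF
  have step1 : ∑ i, ∑ j, ∑ r, ∑ s, u i r * (A i j * S r s) * u j s
      = ∑ p : Fin I × Fin H, ∑ q : Fin I × Fin H, ∑ z : Fin I × Fin H, F z p * F z q := by
    rw [Fintype.sum_prod_type]
    refine Finset.sum_congr rfl fun i _ => ?_
    rw [Finset.sum_comm]
    refine Finset.sum_congr rfl fun r _ => ?_
    rw [Fintype.sum_prod_type]
    refine Finset.sum_congr rfl fun j _ => ?_
    refine Finset.sum_congr rfl fun s _ => ?_
    rw [hAij, hSrs, Finset.sum_mul_sum, Fintype.sum_prod_type, Finset.mul_sum, Finset.sum_mul]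
    refine Finset.sum_congr rfl fun k _ => ?_
    rw [Finset.mul_sum, Finset.sum_mul]
    refine Finset.sum_congr rfl fun t _ => ?_
    simp only [hF]
    ring
  rw [step1]
  have step2 : ∑ p : Fin I × Fin H, ∑ q : Fin I × Fin H, ∑ z : Fin I × Fin H, F z p * F z q
      = ∑ z : Fin I × Fin H, (∑ p : Fin I × Fin H, F z p) ^ 2 := by
    calc ∑ p : Fin I × Fin H, ∑ q : Fin I × Fin H, ∑ z : Fin I × Fin H, F z p * F z q
        = ∑ p : Fin I × Fin H, ∑ z : Fin I × Fin H, ∑ q : Fin I × Fin H, F z p * F z q :=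
          Finset.sum_congr rfl fun p _ => Finset.sum_comm
      _ = ∑ z : Fin I × Fin H, ∑ p : Fin I × Fin H, ∑ q : Fin I × Fin H, F z p * F z q :=
          Finset.sum_comm
      _ = ∑ z : Fin I × Fin H, (∑ p : Fin I × Fin H, F z p) ^ 2 := by
          refine Finset.sum_congr rfl fun z _ => ?_
          rw [sq, Finset.sum_mul_sum]
  rw [step2]
  exact Finset.sum_nonneg fun z _ => sq_nonneg _


lemma sum_delta2 {I H : ℕ} (i : Fin I) (l m : Fin H) (g : Fin I → Fin H → ℝ) :
    ∑ i' : Fin I, ∑ r : Fin H,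
      (if i' = i then ((if r = l then (1:ℝ) else 0) - if r = m then 1 else 0) else 0) * g i' r
      = g i l - g i m := by
  rw [Finset.sum_eq_single i]
  · simp [sub_mul, Finset.sum_sub_distrib, ite_mul]
  · intro b _ hb; simp [hb]
  · simp

lemma sum_delta1 {I H : ℕ} (i : Fin I) (l : Fin H) (g : Fin I → Fin H → ℝ) :
    ∑ i' : Fin I, ∑ r : Fin H,
      (if i' = i then (if r = l then (1:ℝ) else 0) else 0) * g i' r = g i l := by
  rw [Finset.sum_eq_single i]
  · simp [ite_mul]
  · intro b _ hb; simp [hb]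
  · simp

-- reorganize q's quadruple sum so that a left-delta can be applied
lemma q_reorder {I H : ℕ} (A : Matrix (Fin I) (Fin I) ℝ) (S : Matrix (Fin H) (Fin H) ℝ)
    (u v : Fin I → Fin H → ℝ) :
    ∑ i, ∑ j, ∑ r, ∑ s, u i r * (A i j * S r s) * v j s
      = ∑ i, ∑ r, u i r * (∑ j, ∑ s, v j s * (A i j * S r s)) := by
  refine Finset.sum_congr rfl fun i _ => ?_
  rw [Finset.sum_comm]
  refine Finset.sum_congr rfl fun r _ => ?_
  rw [Finset.mul_sum]
  refine Finset.sum_congr rfl fun j _ => ?_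
  rw [Finset.mul_sum]
  refine Finset.sum_congr rfl fun s _ => ?_
  ring


noncomputable def Tfun {H I : ℕ} {Ω : Type*} (W : Ω → Fin I → Fin (H + 1) → ℝ)
    (u : Fin I → Fin H → ℝ) (ω : Ω) : ℝ :=
  ∑ i, ∑ r, u i r * alr (W ω i) r

noncomputable def qform {H I : ℕ} (A : Matrix (Fin I) (Fin I) ℝ)
    (S : Matrix (Fin H) (Fin H) ℝ) (u v : Fin I → Fin H → ℝ) : ℝ :=
  ∑ i, ∑ j, ∑ r, ∑ s, u i r * (A i j * S r s) * v j s

lemma qform_add_left {H I : ℕ} (A : Matrix (Fin I) (Fin I) ℝ) (S : Matrix (Fin H) (Fin H) ℝ)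
    (u v w : Fin I → Fin H → ℝ) :
    qform A S (u + v) w = qform A S u w + qform A S v w := by
  unfold qform
  simp only [Pi.add_apply, add_mul, Finset.sum_add_distrib]

lemma qform_add_right {H I : ℕ} (A : Matrix (Fin I) (Fin I) ℝ) (S : Matrix (Fin H) (Fin H) ℝ)
    (u v w : Fin I → Fin H → ℝ) :
    qform A S w (u + v) = qform A S w u + qform A S w v := by
  unfold qform
  simp only [Pi.add_apply, mul_add, Finset.sum_add_distrib]

lemma qform_symm {H I : ℕ} {A : Matrix (Fin I) (Fin I) ℝ} {S : Matrix (Fin H) (Fin H) ℝ}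
    (hAs : ∀ a b, A b a = A a b) (hSs : ∀ a b, S b a = S a b) (u v : Fin I → Fin H → ℝ) :
    qform A S u v = qform A S v u := by
  unfold qform
  rw [Finset.sum_comm]
  refine Finset.sum_congr rfl fun j _ => Finset.sum_congr rfl fun i _ => ?_
  rw [Finset.sum_comm]
  refine Finset.sum_congr rfl fun s _ => Finset.sum_congr rfl fun r _ => ?_
  rw [show A i j = A j i from hAs j i, show S r s = S s r from hSs s r]
  ring

lemma Tfun_add {H I : ℕ} {Ω : Type*} (W : Ω → Fin I → Fin (H + 1) → ℝ)
    (u v : Fin I → Fin H → ℝ) :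
    Tfun W (u + v) = fun ω => Tfun W u ω + Tfun W v ω := by
  funext ω
  unfold Tfun
  simp only [Pi.add_apply, add_mul, Finset.sum_add_distrib]

lemma Tfun_meas {H I : ℕ} {Ω : Type*} [MeasureSpace Ω]
    (W : Ω → Fin I → Fin (H + 1) → ℝ)
    (hmeas : ∀ i l, Measurable fun ω => W ω i l) (u : Fin I → Fin H → ℝ) :
    Measurable (Tfun W u) := by
  unfold Tfun
  refine Finset.measurable_sum _ fun i _ => Finset.measurable_sum _ fun r _ => ?_
  exact measurable_const.mul
    (Real.measurable_log.comp ((hmeas i r.castSucc).div (hmeas i (Fin.last H))))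

lemma cov_main {H I : ℕ} {Ω : Type*} [MeasureSpace Ω] (P : Measure Ω)
    [IsProbabilityMeasure P]
    (A : Matrix (Fin I) (Fin I) ℝ) (S : Matrix (Fin H) (Fin H) ℝ)
    (hAs : ∀ a b, A b a = A a b) (hSs : ∀ a b, S b a = S a b)
    (hq0 : ∀ u, 0 ≤ qform A S u u)
    (W : Ω → Fin I → Fin (H + 1) → ℝ)
    (hmeas : ∀ i l, Measurable fun ω => W ω i l)
    (hgauss : ∀ c, Measure.map (Tfun W c) P =
      gaussianReal 0 (Real.toNNReal (qform A S c c)))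
    (u v : Fin I → Fin H → ℝ) :
    (∫ ω, Tfun W u ω * Tfun W v ω ∂P) -
      (∫ ω, Tfun W u ω ∂P) * (∫ ω, Tfun W v ω ∂P) = qform A S u v := by
  have hTmeas : ∀ c, Measurable (Tfun W c) := Tfun_meas W hmeas
  have hmean : ∀ c, ∫ ω, Tfun W c ω ∂P = 0 :=
    fun c => map_mean P (hTmeas c) (hgauss c)
  have hL2 : ∀ c, MemLp (Tfun W c) 2 P :=
    fun c => map_memLp P (hTmeas c) (hgauss c)
  have hsq : ∀ c, ∫ ω, Tfun W c ω ^ 2 ∂P = qform A S c c := by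
    intro c
    have h := map_sq P (hTmeas c) (hgauss c)
    rwa [Real.coe_toNNReal _ (hq0 c)] at h
  have h3 : ∫ ω, (Tfun W u ω + Tfun W v ω) ^ 2 ∂P = qform A S (u + v) (u + v) := by
    have h := hsq (u + v)
    rw [Tfun_add] at h
    exact h
  have qexp : qform A S (u + v) (u + v)
      = qform A S u u + 2 * qform A S u v + qform A S v v := by
    rw [qform_add_left, qform_add_right, qform_add_right, qform_symm hAs hSs v u]
    ring
  have int1 : Integrable (fun ω => Tfun W u ω ^ 2) P := (hL2 u).integrable_sq
  have int2 : Integrable (fun ω => Tfun W v ω ^ 2) P := (hL2 v).integrable_sq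
  have int3 : Integrable (fun ω => (Tfun W u ω + Tfun W v ω) ^ 2) P := by
    have h := ((hL2 u).add (hL2 v)).integrable_sq
    simpa [Pi.add_apply] using h
  have hpt : (fun ω => Tfun W u ω * Tfun W v ω)
      = fun ω => (1/2) * ((Tfun W u ω + Tfun W v ω) ^ 2 - Tfun W u ω ^ 2 - Tfun W v ω ^ 2) :=
    funext fun ω => by ring
  rw [hmean u, hmean v, mul_zero, sub_zero]
  calc ∫ ω, Tfun W u ω * Tfun W v ω ∂P
      = ∫ ω, (1/2) * ((Tfun W u ω + Tfun W v ω) ^ 2 - Tfun W u ω ^ 2 - Tfun W v ω ^ 2) ∂P := by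
        rw [hpt]
    _ = (1/2) * ((∫ ω, (Tfun W u ω + Tfun W v ω) ^ 2 ∂P)
          - (∫ ω, Tfun W u ω ^ 2 ∂P) - (∫ ω, Tfun W v ω ^ 2 ∂P)) := by
        have int31 : Integrable
            (fun ω => (Tfun W u ω + Tfun W v ω) ^ 2 - Tfun W u ω ^ 2) P := int3.sub int1
        rw [integral_const_mul, integral_sub int31 int2, integral_sub int3 int1]
    _ = qform A S u v := by
        rw [h3, hsq u, hsq v, qexp]
        ring

end LMCAR
end LMCARAux

/-- Proposition 2 (marginal covariances of the logisticMCAR with `m̃ = 0`).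
The joint MCAR law of `w̃ = (alr w_1, …, alr w_I)` is the centered Gaussian with
covariance `A ⊗ Σ`, `A = (F − ρG)⁻¹` (characterized below through its
one-dimensional linear projections).  Then
`Cov(log(w_{il}/w_{im}), log(w_{jl}/w_{jm})) = A_{ij}(Σ_{ll} − 2Σ_{lm} + Σ_{mm})`
and `Cov(log(w_{il}/w_{iH}), log(w_{jl}/w_{jH})) = A_{ij} Σ_{ll}`. -/
theorem logisticMCAR_marginal_covariance
    (H I : ℕ) {Ω : Type*} [MeasureSpace Ω] (P : Measure Ω) [IsProbabilityMeasure P]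
    (G : Matrix (Fin I) (Fin I) ℝ)
    (hG01 : ∀ i j, G i j = 0 ∨ G i j = 1)
    (hGsymm : G.IsSymm) (hGdiag : ∀ i, G i i = 0)
    (ρ : ℝ) (hρ : ρ ∈ Set.Ioo (0 : ℝ) 1)
    (S : Matrix (Fin H) (Fin H) ℝ) (hS : S.PosDef)
    (A : Matrix (Fin I) (Fin I) ℝ)
    (hA : A = (Matrix.diagonal (fun i => ρ * ∑ j, G i j + 1 - ρ) - ρ • G)⁻¹)
    (W : Ω → Fin I → Fin (H + 1) → ℝ)
    (hmeas : ∀ i l, Measurable fun ω => W ω i l)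
    (hSpos : ∀ ω i, W ω i ∈ Spos H)
    (hgauss : ∀ c : Fin I → Fin H → ℝ,
      Measure.map (fun ω => ∑ i, ∑ r, c i r * alr (W ω i) r) P =
        ProbabilityTheory.gaussianReal 0
          (Real.toNNReal
            (∑ i, ∑ j, ∑ r, ∑ s, c i r * (A i j * S r s) * c j s)))
    (i j : Fin I) :
    (∀ l m : Fin H,
      ∫ ω, Real.log (W ω i l.castSucc / W ω i m.castSucc) *
            Real.log (W ω j l.castSucc / W ω j m.castSucc) ∂P -
        (∫ ω, Real.log (W ω i l.castSucc / W ω i m.castSucc) ∂P) *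
          (∫ ω, Real.log (W ω j l.castSucc / W ω j m.castSucc) ∂P) =
      A i j * (S l l - 2 * S l m + S m m)) ∧
    (∀ l : Fin H,
      ∫ ω, Real.log (W ω i l.castSucc / W ω i (Fin.last H)) *
            Real.log (W ω j l.castSucc / W ω j (Fin.last H)) ∂P -
        (∫ ω, Real.log (W ω i l.castSucc / W ω i (Fin.last H)) ∂P) *
          (∫ ω, Real.log (W ω j l.castSucc / W ω j (Fin.last H)) ∂P) =
      A i j * S l l) := by
  have hApos : A.PosDef := by
    rw [hA]; exact (LMCAR.Mpos G hG01 hGsymm ρ hρ).inv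
  have hAs : ∀ a b, A b a = A a b := by
    intro a b
    have h2 := congrFun (congrFun hApos.isHermitian a) b
    simpa [Matrix.conjTranspose_apply] using h2
  have hSs : ∀ a b, S b a = S a b := by
    intro a b
    have h2 := congrFun (congrFun hS.isHermitian a) b
    simpa [Matrix.conjTranspose_apply] using h2
  have hq0 : ∀ u, 0 ≤ LMCAR.qform A S u u := fun u =>
    LMCAR.quad_nonneg hApos.posSemidef hS.posSemidef u
  have hgauss' : ∀ c, Measure.map (LMCAR.Tfun W c) P =
      ProbabilityTheory.gaussianReal 0 (Real.toNNReal (LMCAR.qform A S c c)) :=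
    fun c => hgauss c
  have hcov := LMCAR.cov_main P A S hAs hSs hq0 W hmeas hgauss'
  constructor
  · intro l m
    have hu : ∀ (a : Fin I) (ω : Ω), Real.log (W ω a l.castSucc / W ω a m.castSucc)
        = LMCAR.Tfun W (fun i' r => if i' = a then
            ((if r = l then (1:ℝ) else 0) - if r = m then 1 else 0) else 0) ω := by
      intro a ω
      obtain ⟨hpos, -⟩ := hSpos ω a
      have ha := hpos l.castSucc
      have hb := hpos m.castSucc
      have hc := hpos (Fin.last H)
      have h2 : Real.log (W ω a l.castSucc / W ω a m.castSucc)
          = alr (W ω a) l - alr (W ω a) m := by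
        unfold alr
        rw [Real.log_div ha.ne' hb.ne', Real.log_div ha.ne' hc.ne',
          Real.log_div hb.ne' hc.ne']
        ring
      rw [h2]
      exact (LMCAR.sum_delta2 a l m fun i' r => alr (W ω i') r).symm
    simp only [hu i, hu j]
    rw [hcov _ _]
    unfold LMCAR.qform
    rw [LMCAR.q_reorder]
    rw [LMCAR.sum_delta2 i l m]
    rw [LMCAR.sum_delta2 j l m, LMCAR.sum_delta2 j l m]
    rw [hSs l m]
    ring
  · intro l
    have hu : ∀ (a : Fin I) (ω : Ω), Real.log (W ω a l.castSucc / W ω a (Fin.last H))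
        = LMCAR.Tfun W (fun i' r => if i' = a then
            (if r = l then (1:ℝ) else 0) else 0) ω := by
      intro a ω
      exact (LMCAR.sum_delta1 a l fun i' r => alr (W ω i') r).symm
    simp only [hu i, hu j]
    rw [hcov _ _]
    unfold LMCAR.qform
    rw [LMCAR.q_reorder]
    rw [LMCAR.sum_delta1 i l]
    rw [LMCAR.sum_delta1 j l]
end

section
/- Pólya-Gamma integral identity: for all η ∈ ℝ, a ∈ ℝ, and b > 0, (e^η)^a / (1 + e^η)^b = 2^{-b} e^{(a − b/2)η} ∫_0^∞ e^{−ω η²/2} p(ω) dω, where p is the density of the PG(b, 0) Pólya-Gamma distribution. -/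
open MeasureTheory

/-- The Pólya-Gamma integral identity: if `p` is the density of the `PG(b,0)`
distribution — characterized by its Laplace transform
`∫_0^∞ e^{−ωt} p(ω) dω = cosh(√(t/2))^{−b}` — then for all `η, a ∈ ℝ` and `b > 0`,
`(e^η)^a / (1+e^η)^b = 2^{−b} e^{(a−b/2)η} ∫_0^∞ e^{−ωη²/2} p(ω) dω`. -/
theorem polya_gamma_identity
    (b : ℝ) (hb : 0 < b) (p : ℝ → ℝ)
    (hp_nonneg : ∀ ω, 0 ≤ p ω)
    (hp_laplace : ∀ t : ℝ, 0 ≤ t →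
      ∫ ω in Set.Ioi (0 : ℝ), Real.exp (-ω * t) * p ω =
        (Real.cosh (Real.sqrt (t / 2))) ^ (-b)) :
    ∀ η a : ℝ,
      (Real.exp η) ^ a / (1 + Real.exp η) ^ b =
        2 ^ (-b) * Real.exp ((a - b / 2) * η) *
          ∫ ω in Set.Ioi (0 : ℝ), Real.exp (-ω * η ^ 2 / 2) * p ω := by
  intro η a
  have ht : (0:ℝ) ≤ η ^ 2 / 2 := by positivity
  have h := hp_laplace (η ^ 2 / 2) ht
  have heq : (∫ ω in Set.Ioi (0:ℝ), Real.exp (-ω * η ^ 2 / 2) * p ω)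
      = ∫ ω in Set.Ioi (0:ℝ), Real.exp (-ω * (η ^ 2 / 2)) * p ω := by
    congr 1; funext ω; ring_nf
  rw [heq, h]
  have hs : Real.sqrt (η ^ 2 / 2 / 2) = |η| / 2 := by
    rw [show η ^ 2 / 2 / 2 = (η / 2) ^ 2 by ring, Real.sqrt_sq_eq_abs, abs_div]
    norm_num
  rw [hs]
  have hcosh : Real.cosh (|η| / 2) = Real.cosh (η / 2) := by
    rcases abs_cases η with ⟨h1, _⟩ | ⟨h1, _⟩ <;> rw [h1]
    rw [neg_div, Real.cosh_neg]
  rw [hcosh]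
  have h1e : 1 + Real.exp η = 2 * Real.exp (η / 2) * Real.cosh (η / 2) := by
    rw [Real.cosh_eq]
    rw [show 2 * Real.exp (η/2) * ((Real.exp (η/2) + Real.exp (-(η/2))) / 2)
        = Real.exp (η/2) * Real.exp (η/2) + Real.exp (η/2) * Real.exp (-(η/2)) by ring,
      ← Real.exp_add, ← Real.exp_add]
    norm_num [add_comm]
  have hc : 0 < Real.cosh (η / 2) := Real.cosh_pos _
  have he : 0 < Real.exp (η / 2) := Real.exp_pos _
  rw [h1e]
  rw [Real.mul_rpow (by positivity) hc.le, Real.mul_rpow (by norm_num) he.le]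
  rw [← Real.exp_mul, ← Real.exp_mul]
  rw [show (a - b / 2) * η = η * a + -(η / 2 * b) by ring, Real.exp_add, Real.exp_neg]
  rw [Real.rpow_neg (by norm_num : (0:ℝ) ≤ 2)]
  field_simp
  have hcc : Real.cosh (η / 2) ^ b * Real.cosh (η / 2) ^ (-b) = 1 := by
    rw [← Real.rpow_add hc, add_neg_cancel, Real.rpow_zero]
  rw [hcc]
end
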